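/- Let G be a monoidal pseudoregular groupoid. For idempotents e ≥ f of V(G), the map φ_f^e : π_e^⋈(G) → π_f^⋈(G), α ↦ f ▷ α ◁ f, is a group homomorphism, and these maps form a presheaf: φ_e^e = id and φ_f^e φ_g^f = φ_g^e whenever e ≥ f ≥ g. Moreover the action α ◁ s = s⁻¹ ▷ α ◁ s for s ∈ V(G) makes the family {π_e^⋈(G)} a V(G)-module in the sense of Lausch. -/
import Mathlib


/-- An inverse monoid. -/
class InverseMonoid (M : Type*) extends Monoid M, Inv M where
  mul_inv_mul : ∀ a : M, a * a⁻¹ * a = a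
  inv_mul_inv : ∀ a : M, a⁻¹ * a * a⁻¹ = a⁻¹
  idem_comm : ∀ e f : M, e * e = e → f * f = f → e * f = f * e

/-- A semiregular groupoid: a groupoid (given algebraically by its set of arrows `G`
over a vertex monoid `V`, with totalised composition `comp` whose axioms are guarded by
the composability condition `r α = d β`) together with left and right actions of the
vertex monoid `V` on arrows, satisfying the axioms of Definition 2.1. -/
structure SemiregularGroupoid (V : Type*) [Monoid V] (G : Type*) where
  d : G → V
  r : G → V
  comp : G → G → G
  id : V → G
  inv : G → G
  d_id : ∀ v, d (id v) = v
  r_id : ∀ v, r (id v) = v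
  d_comp : ∀ α β, r α = d β → d (comp α β) = d α
  r_comp : ∀ α β, r α = d β → r (comp α β) = r β
  comp_assoc : ∀ α β γ, r α = d β → r β = d γ →
    comp (comp α β) γ = comp α (comp β γ)
  id_comp : ∀ α, comp (id (d α)) α = α
  comp_id : ∀ α, comp α (id (r α)) = α
  d_inv : ∀ α, d (inv α) = r α
  r_inv : ∀ α, r (inv α) = d α
  comp_inv : ∀ α, comp α (inv α) = id (d α)
  inv_comp : ∀ α, comp (inv α) α = id (r α)
  actL : V → G → G
  actR : G → V → G
  actL_mul : ∀ x y α, actL (x * y) α = actL x (actL y α)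
  actR_mul : ∀ α x y, actR α (x * y) = actR (actR α x) y
  actL_actR : ∀ x α y, actR (actL x α) y = actL x (actR α y)
  one_actL : ∀ α, actL 1 α = α
  actR_one : ∀ α, actR α 1 = α
  d_actL : ∀ x α, d (actL x α) = x * d α
  d_actR : ∀ α x, d (actR α x) = d α * x
  r_actL : ∀ x α, r (actL x α) = x * r α
  r_actR : ∀ α x, r (actR α x) = r α * x
  actL_comp : ∀ x α β, r α = d β → actL x (comp α β) = comp (actL x α) (actL x β)
  actR_comp : ∀ α β x, r α = d β → actR (comp α β) x = comp (actR α x) (actR β x)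
  actL_id : ∀ x y, actL x (id y) = id (x * y)
  actR_id : ∀ x y, actR (id x) y = id (x * y)

/-- The operation `α ∗ β = (α ◁ βd) ∘ (αr ▷ β)`. -/
def SemiregularGroupoid.star {V : Type*} [Monoid V] {G : Type*}
    (S : SemiregularGroupoid V G) (α β : G) : G :=
  S.comp (S.actR α (S.d β)) (S.actL (S.r α) β)

/-- The operation `α ⊛ β = (αd ▷ β) ∘ (α ◁ βr)`. -/
def SemiregularGroupoid.ostar {V : Type*} [Monoid V] {G : Type*}
    (S : SemiregularGroupoid V G) (α β : G) : G :=
  S.comp (S.actL (S.d α) β) (S.actR α (S.r β))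

/-- `star_e^⋈(G) = {e ▷ α ◁ e : αd = e}`. -/
def bowtieStar {V : Type*} [InverseMonoid V] {G : Type*}
    (S : SemiregularGroupoid V G) (e : V) : Set G :=
  {γ | ∃ α : G, S.d α = e ∧ γ = S.actL e (S.actR α e)}

/-- `π_e^⋈(G) = {α ∈ star_e^⋈(G) : αr = e}`. -/
def bowtiePi {V : Type*} [InverseMonoid V] {G : Type*}
    (S : SemiregularGroupoid V G) (e : V) : Set G :=
  {γ ∈ bowtieStar S e | S.r γ = e}

/-- The structure map `φ_f^e : α ↦ f ▷ α ◁ f`. -/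
def phiMap {V : Type*} [InverseMonoid V] {G : Type*}
    (S : SemiregularGroupoid V G) (f : V) (γ : G) : G :=
  S.actL f (S.actR γ f)

/-- The action `α ◁ s = s⁻¹ ▷ α ◁ s`. -/
def actM {V : Type*} [InverseMonoid V] {G : Type*}
    (S : SemiregularGroupoid V G) (s : V) (γ : G) : G :=
  S.actL s⁻¹ (S.actR γ s)


section Aux

variable {M : Type*} [InverseMonoid M]

/-- Uniqueness of inverses in an inverse monoid. -/
lemma IM_inv_unique (a x : M) (h1 : a * x * a = a) (h2 : x * a * x = x) :
    a⁻¹ = x := by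
  have hy1 : a * a⁻¹ * a = a := InverseMonoid.mul_inv_mul a
  have hy2 : a⁻¹ * a * a⁻¹ = a⁻¹ := InverseMonoid.inv_mul_inv a
  have hax : (a * x) * (a * x) = a * x := by
    calc (a * x) * (a * x) = (a * x * a) * x := by simp [mul_assoc]
    _ = a * x := by rw [h1]
  have hay : (a * a⁻¹) * (a * a⁻¹) = a * a⁻¹ := by
    calc (a * a⁻¹) * (a * a⁻¹) = (a * a⁻¹ * a) * a⁻¹ := by simp [mul_assoc]
    _ = a * a⁻¹ := by rw [hy1]
  have hA : a * x = a * a⁻¹ := by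
    calc a * x = (a * a⁻¹ * a) * x := by rw [hy1]
    _ = (a * a⁻¹) * (a * x) := by simp [mul_assoc]
    _ = (a * x) * (a * a⁻¹) := InverseMonoid.idem_comm _ _ hay hax
    _ = (a * x * a) * a⁻¹ := by simp [mul_assoc]
    _ = a * a⁻¹ := by rw [h1]
  have hB : x * a = a⁻¹ * a := by
    have hxa : (x * a) * (x * a) = x * a := by
      calc (x * a) * (x * a) = (x * a * x) * a := by simp [mul_assoc]
      _ = x * a := by rw [h2]
    have hya : (a⁻¹ * a) * (a⁻¹ * a) = a⁻¹ * a := by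
      calc (a⁻¹ * a) * (a⁻¹ * a) = (a⁻¹ * a * a⁻¹) * a := by simp [mul_assoc]
      _ = a⁻¹ * a := by rw [hy2]
    calc x * a = x * (a * a⁻¹ * a) := by rw [hy1]
    _ = (x * a) * (a⁻¹ * a) := by simp [mul_assoc]
    _ = (a⁻¹ * a) * (x * a) := InverseMonoid.idem_comm _ _ hxa hya
    _ = a⁻¹ * (a * x * a) := by simp [mul_assoc]
    _ = a⁻¹ * a := by rw [h1]
  calc a⁻¹ = a⁻¹ * a * a⁻¹ := hy2.symm
  _ = (x * a) * a⁻¹ := by rw [hB]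
  _ = x * (a * a⁻¹) := by rw [mul_assoc]
  _ = x * (a * x) := by rw [← hA]
  _ = x * a * x := by rw [← mul_assoc]
  _ = x := h2

lemma IM_inv_idem (e : M) (he : e * e = e) : e⁻¹ = e :=
  IM_inv_unique e e (by rw [he, he]) (by rw [he, he])

lemma IM_idem_mul_inv (s : M) : (s * s⁻¹) * (s * s⁻¹) = s * s⁻¹ := by
  calc (s * s⁻¹) * (s * s⁻¹) = (s * s⁻¹ * s) * s⁻¹ := by simp [mul_assoc]
  _ = s * s⁻¹ := by rw [InverseMonoid.mul_inv_mul]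

lemma IM_idem_inv_mul (s : M) : (s⁻¹ * s) * (s⁻¹ * s) = s⁻¹ * s := by
  calc (s⁻¹ * s) * (s⁻¹ * s) = (s⁻¹ * s * s⁻¹) * s := by simp [mul_assoc]
  _ = s⁻¹ * s := by rw [InverseMonoid.inv_mul_inv]

lemma IM_mul_inv_rev (s t : M) : (s * t)⁻¹ = t⁻¹ * s⁻¹ := by
  have hcomm : (t * t⁻¹) * (s⁻¹ * s) = (s⁻¹ * s) * (t * t⁻¹) :=
    InverseMonoid.idem_comm _ _ (IM_idem_mul_inv t) (IM_idem_inv_mul s)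
  refine IM_inv_unique _ _ ?_ ?_
  · calc (s * t) * (t⁻¹ * s⁻¹) * (s * t)
        = s * ((t * t⁻¹) * (s⁻¹ * s)) * t := by simp [mul_assoc]
    _ = s * ((s⁻¹ * s) * (t * t⁻¹)) * t := by rw [hcomm]
    _ = (s * s⁻¹ * s) * (t * t⁻¹ * t) := by simp [mul_assoc]
    _ = s * t := by rw [InverseMonoid.mul_inv_mul, InverseMonoid.mul_inv_mul]
  · calc (t⁻¹ * s⁻¹) * (s * t) * (t⁻¹ * s⁻¹)
        = t⁻¹ * ((s⁻¹ * s) * (t * t⁻¹)) * s⁻¹ := by simp [mul_assoc]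
    _ = t⁻¹ * ((t * t⁻¹) * (s⁻¹ * s)) * s⁻¹ := by rw [← hcomm]
    _ = (t⁻¹ * t * t⁻¹) * (s⁻¹ * s * s⁻¹) := by simp [mul_assoc]
    _ = t⁻¹ * s⁻¹ := by rw [InverseMonoid.inv_mul_inv, InverseMonoid.inv_mul_inv]

lemma IM_conj_idem (s e : M) (he : e * e = e) :
    (s⁻¹ * e * s) * (s⁻¹ * e * s) = s⁻¹ * e * s := by
  have hcomm : (s * s⁻¹) * e = e * (s * s⁻¹) :=
    InverseMonoid.idem_comm _ _ (IM_idem_mul_inv s) he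
  calc (s⁻¹ * e * s) * (s⁻¹ * e * s)
      = (s⁻¹ * e) * ((s * s⁻¹) * e) * s := by simp [mul_assoc]
  _ = (s⁻¹ * e) * (e * (s * s⁻¹)) * s := by rw [hcomm]
  _ = (s⁻¹ * (e * e)) * (s * s⁻¹ * s) := by simp [mul_assoc]
  _ = s⁻¹ * e * s := by rw [he, InverseMonoid.mul_inv_mul]

lemma IM_conj_absL (s e : M) (he : e * e = e) :
    (s⁻¹ * e * s) * s⁻¹ = s⁻¹ * e := by
  have hcomm : e * (s * s⁻¹) = (s * s⁻¹) * e :=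
    InverseMonoid.idem_comm _ _ he (IM_idem_mul_inv s)
  calc (s⁻¹ * e * s) * s⁻¹ = s⁻¹ * (e * (s * s⁻¹)) := by simp [mul_assoc]
  _ = s⁻¹ * ((s * s⁻¹) * e) := by rw [hcomm]
  _ = (s⁻¹ * s * s⁻¹) * e := by simp [mul_assoc]
  _ = s⁻¹ * e := by rw [InverseMonoid.inv_mul_inv]

lemma IM_conj_absR (s e : M) (he : e * e = e) :
    s * (s⁻¹ * e * s) = e * s := by
  have hcomm : (s * s⁻¹) * e = e * (s * s⁻¹) :=
    InverseMonoid.idem_comm _ _ (IM_idem_mul_inv s) he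
  calc s * (s⁻¹ * e * s) = ((s * s⁻¹) * e) * s := by simp [mul_assoc]
  _ = (e * (s * s⁻¹)) * s := by rw [hcomm]
  _ = e * (s * s⁻¹ * s) := by simp [mul_assoc]
  _ = e * s := by rw [InverseMonoid.mul_inv_mul]

end Aux

section AuxG

variable {V : Type*} [InverseMonoid V] {G : Type*} (S : SemiregularGroupoid V G)

lemma SR_mem_pi_iff {e : V} (he : e * e = e) (γ : G) :
    γ ∈ bowtiePi S e ↔
      S.d γ = e ∧ S.r γ = e ∧ S.actL e (S.actR γ e) = γ := by
  simp only [bowtiePi, bowtieStar, Set.mem_setOf_eq, Set.mem_sep_iff]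
  constructor
  · rintro ⟨⟨α, hd, rfl⟩, hr⟩
    refine ⟨?_, hr, ?_⟩
    · rw [S.d_actL, S.d_actR, hd, he, he]
    · rw [S.actL_actR, ← S.actL_mul, he, ← S.actR_mul, he]
  · rintro ⟨hd, hr, hfix⟩
    exact ⟨⟨γ, hd, hfix.symm⟩, hr⟩

lemma SR_fixR {e : V} (he : e * e = e) {γ : G}
    (hfix : S.actL e (S.actR γ e) = γ) : S.actR γ e = γ := by
  conv_lhs => rw [← hfix]
  rw [S.actL_actR, ← S.actR_mul, he, hfix]

lemma SR_fixL {e : V} (he : e * e = e) {γ : G}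
    (hfix : S.actL e (S.actR γ e) = γ) : S.actL e γ = γ := by
  conv_lhs => rw [← hfix]
  rw [← S.actL_mul, he, hfix]

lemma SR_pi_star_eq_comp {e : V} (he : e * e = e) {γ δ : G}
    (hγ : γ ∈ bowtiePi S e) (hδ : δ ∈ bowtiePi S e) :
    S.star γ δ = S.comp γ δ := by
  obtain ⟨hγd, hγr, hγf⟩ := (SR_mem_pi_iff S he γ).mp hγ
  obtain ⟨hδd, hδr, hδf⟩ := (SR_mem_pi_iff S he δ).mp hδ
  simp only [SemiregularGroupoid.star]
  rw [hδd, hγr, SR_fixR S he hγf, SR_fixL S he hδf]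

lemma SR_act_mem {e : V} (he : e * e = e) (s : V) {γ : G}
    (hγ : γ ∈ bowtiePi S e) : actM S s γ ∈ bowtiePi S (s⁻¹ * e * s) := by
  obtain ⟨hd, hr, hfix⟩ := (SR_mem_pi_iff S he γ).mp hγ
  rw [SR_mem_pi_iff S (IM_conj_idem s e he)]
  refine ⟨?_, ?_, ?_⟩
  · simp [actM, S.d_actL, S.d_actR, hd, mul_assoc]
  · simp [actM, S.r_actL, S.r_actR, hr, mul_assoc]
  · simp only [actM]
    rw [S.actL_actR, ← S.actR_mul, ← S.actL_mul, IM_conj_absL s e he,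
      IM_conj_absR s e he, S.actL_mul, S.actR_mul, ← S.actL_actR, hfix]

lemma SR_act_star {e : V} (he : e * e = e) (s : V) {γ δ : G}
    (hγ : γ ∈ bowtiePi S e) (hδ : δ ∈ bowtiePi S e) :
    actM S s (S.star γ δ) = S.star (actM S s γ) (actM S s δ) := by
  obtain ⟨hγd, hγr, hγf⟩ := (SR_mem_pi_iff S he γ).mp hγ
  obtain ⟨hδd, hδr, hδf⟩ := (SR_mem_pi_iff S he δ).mp hδ
  rw [SR_pi_star_eq_comp S he hγ hδ,
    SR_pi_star_eq_comp S (IM_conj_idem s e he) (SR_act_mem S he s hγ)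
      (SR_act_mem S he s hδ)]
  simp only [actM]
  rw [S.actR_comp γ δ s (by rw [hγr, hδd]),
    S.actL_comp s⁻¹ _ _ (by rw [S.r_actR, S.d_actR, hγr, hδd])]

end AuxG

/-- in a monoidal pseudoregular groupoid, for idempotents `e ≥ f ≥ g`
of `V(G)` the maps `φ_f^e : π_e^⋈(G) → π_f^⋈(G)`, `α ↦ f ▷ α ◁ f`, are group
homomorphisms forming a presheaf (`φ_e^e = id`, `φ_f^e φ_g^f = φ_g^e`), and the action
`α ◁ s = s⁻¹ ▷ α ◁ s` makes `{π_e^⋈(G)}` a `V(G)`-module in the sense of Lausch. -/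
theorem stmt11 {V : Type*} [InverseMonoid V] {G : Type*}
    (S : SemiregularGroupoid V G)
    (hmonoidal : ∀ α β : G, S.star α β = S.ostar α β)
    (e f g : V) (he : e * e = e) (hf : f * f = f) (hg : g * g = g)
    (hfe : f * e = f) (hgf : g * f = g) :
    -- φ_f^e maps π_e^⋈ into π_f^⋈ and is a homomorphism
    (∀ γ ∈ bowtiePi S e, phiMap S f γ ∈ bowtiePi S f) ∧
    (∀ γ ∈ bowtiePi S e, ∀ δ ∈ bowtiePi S e,
      phiMap S f (S.star γ δ) = S.star (phiMap S f γ) (phiMap S f δ)) ∧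
    -- φ_e^e is the identity
    (∀ γ ∈ bowtiePi S e, phiMap S e γ = γ) ∧
    -- φ_f^e φ_g^f = φ_g^e
    (∀ γ ∈ bowtiePi S e, phiMap S g (phiMap S f γ) = phiMap S g γ) ∧
    -- the action maps π_e^⋈ into π_{s⁻¹es}^⋈
    (∀ s : V, ∀ γ ∈ bowtiePi S e, actM S s γ ∈ bowtiePi S (s⁻¹ * e * s)) ∧
    -- (a ⊕ b) ◁ s = (a ◁ s) ⊕ (b ◁ s)
    (∀ s : V, ∀ γ ∈ bowtiePi S e, ∀ δ ∈ bowtiePi S e,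
      actM S s (S.star γ δ) = S.star (actM S s γ) (actM S s δ)) ∧
    -- a ◁ (st) = (a ◁ s) ◁ t
    (∀ s t : V, ∀ γ ∈ bowtiePi S e, actM S (s * t) γ = actM S t (actM S s γ)) ∧
    -- a ◁ e' = a ⊕ 0_{e'}, i.e. acting by an idempotent e' is the structure map to
    -- the component at e * e'
    (∀ e' : V, e' * e' = e' → ∀ γ ∈ bowtiePi S e, actM S e' γ = phiMap S (e * e') γ) ∧
    -- 0_{e'} ◁ s = 0_{s⁻¹e's}
    (∀ e' : V, e' * e' = e' → ∀ s : V, actM S s (S.id e') = S.id (s⁻¹ * e' * s)) := by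
  have hef : e * f = f := (InverseMonoid.idem_comm e f he hf).trans hfe
  have hfg : f * g = g := (InverseMonoid.idem_comm f g hf hg).trans hgf
  have hphi_act : ∀ γ : G, phiMap S f γ = actM S f γ := by
    intro γ; simp only [phiMap, actM, IM_inv_idem f hf]
  refine ⟨?_, ?_, ?_, ?_, ?_, ?_, ?_, ?_, ?_⟩
  · -- φ_f maps π_e into π_f
    intro γ hγ
    have h := SR_act_mem S he f hγ
    rw [IM_inv_idem f hf, hfe, hf] at h
    rw [hphi_act]
    exact h
  · -- φ_f is a homomorphism
    intro γ hγ δ hδ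
    have h := SR_act_star S he f hγ hδ
    rw [hphi_act, hphi_act, hphi_act]
    exact h
  · -- φ_e is the identity
    intro γ hγ
    exact ((SR_mem_pi_iff S he γ).mp hγ).2.2
  · -- φ_g φ_f = φ_g
    intro γ hγ
    simp only [phiMap]
    rw [S.actL_actR, ← S.actR_mul, ← S.actL_mul, hgf, hfg]
  · -- the action maps π_e into π_{s⁻¹es}
    intro s γ hγ
    exact SR_act_mem S he s hγ
  · -- action distributes over ⊕
    intro s γ hγ δ hδ
    exact SR_act_star S he s hγ hδ
  · -- a ◁ (st) = (a ◁ s) ◁ t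
    intro s t γ hγ
    simp only [actM]
    rw [IM_mul_inv_rev, S.actR_mul, S.actL_mul, S.actL_actR]
  · -- acting by an idempotent is the structure map
    intro e' he' γ hγ
    obtain ⟨hd, hr, hfix⟩ := (SR_mem_pi_iff S he γ).mp hγ
    have hfixR := SR_fixR S he hfix
    have hfixL := SR_fixL S he hfix
    simp only [actM, phiMap, IM_inv_idem e' he']
    symm
    rw [S.actR_mul, hfixR, InverseMonoid.idem_comm e e' he he', S.actL_mul,
      ← S.actL_actR, hfixL]
  · -- 0_{e'} ◁ s = 0_{s⁻¹e's}
    intro e' _ s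
    simp [actM, S.actR_id, S.actL_id, mul_assoc]
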